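/- For any 0/1 matrix A with a SUM-covering of spectral weight σ₀, the Kronecker power A^{⊗n} has a SUM-covering of complexity at most 2·σ₀^n·max over narrowness terms; in particular, using the covering of D₂ by a 2×1 rectangle and a 1×1 rectangle (spectral weight 1+√2, all rectangles of narrowness ≤ 2), one obtains SUM₂(D_{2^n}) ≤ C·(1+√2)^n for an absolute constant C. -/

import Mathlib

/-- A rank-1 0/1 matrix (rectangle). -/
def IsRectangle {α β : Type*} (R : Matrix α β ℤ) : Prop :=
  ∃ u v, (∀ x, u x = 0 ∨ u x = 1) ∧ (∀ y, v y = 0 ∨ v y = 1) ∧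
    R = Matrix.vecMulVec u v

/-- Number of nonzero rows of a matrix. -/
noncomputable def numRows {α β : Type*} [Fintype α] [Fintype β] (R : Matrix α β ℤ) : ℕ :=
  (@Finset.filter _ (fun i => ∃ j, R i j ≠ 0) (fun _ => Fintype.decidableExistsFintype) Finset.univ).card

/-- Number of nonzero columns of a matrix. -/
noncomputable def numCols {α β : Type*} [Fintype α] [Fintype β] (R : Matrix α β ℤ) : ℕ :=
  (Finset.univ.filter fun j => ∃ i, R i j ≠ 0).card

/-- The disjointness matrix D_{2^n} = D₂^{⊗n}. -/
def Dmat (n : ℕ) : Matrix (Fin n → Bool) (Fin n → Bool) ℤ :=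
  Matrix.of fun u v => if ∀ i, ¬(u i = true ∧ v i = true) then 1 else 0

namespace Stmt7aux

/-- support cardinality of a vector -/
def suppCard {n : ℕ} (U : (Fin n → Bool) → ℤ) : ℕ :=
  (Finset.univ.filter fun u => U u ≠ 0).card

/-- extend a vector by fixing the new first coordinate to `k` -/
def extFix {n : ℕ} (k : Bool) (U : (Fin n → Bool) → ℤ) : (Fin (n+1) → Bool) → ℤ :=
  fun u => if u 0 = k then U (Fin.tail u) else 0

/-- extend a vector leaving the new first coordinate free -/
def extFree {n : ℕ} (U : (Fin n → Bool) → ℤ) : (Fin (n+1) → Bool) → ℤ :=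
  fun u => U (Fin.tail u)

lemma extFix_ne_zero_iff {n : ℕ} (k : Bool) (U : (Fin n → Bool) → ℤ)
    (u : Fin (n+1) → Bool) : extFix k U u ≠ 0 ↔ u 0 = k ∧ U (Fin.tail u) ≠ 0 := by
  unfold extFix; split <;> simp_all

lemma suppCard_extFix {n : ℕ} (k : Bool) (U : (Fin n → Bool) → ℤ) :
    suppCard (extFix k U) = suppCard U := by
  unfold suppCard
  apply Finset.card_nbij' (fun u => Fin.tail u) (fun u => Fin.cons k u)
  · intro u hu
    simp only [Finset.mem_coe, Finset.mem_filter, Finset.mem_univ, true_and, extFix_ne_zero_iff] at hu ⊢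
    exact hu.2
  · intro u hu
    simp only [Finset.mem_coe, Finset.mem_filter, Finset.mem_univ, true_and, extFix_ne_zero_iff] at hu ⊢
    exact ⟨Fin.cons_zero _ _, by rwa [Fin.tail_cons]⟩
  · intro u hu
    simp only [Finset.mem_coe, Finset.mem_filter, Finset.mem_univ, true_and, extFix_ne_zero_iff] at hu
    conv_rhs => rw [← Fin.cons_self_tail u]
    rw [hu.1]
  · intro u _
    exact Fin.tail_cons _ _

lemma suppCard_extFree {n : ℕ} (U : (Fin n → Bool) → ℤ) :
    suppCard (extFree U) = 2 * suppCard U := by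
  have key : (Finset.univ.filter fun u => extFree U u ≠ 0)
      = (Finset.univ.filter fun u => extFix false U u ≠ 0)
        ∪ (Finset.univ.filter fun u => extFix true U u ≠ 0) := by
    ext u
    simp only [Finset.mem_filter, Finset.mem_univ, true_and, Finset.mem_union]
    simp only [extFix_ne_zero_iff, extFree]
    cases h : u 0 <;> simp [h]
  have hdisj : Disjoint (Finset.univ.filter fun u => extFix false U u ≠ 0)
      (Finset.univ.filter fun u => extFix true U u ≠ 0) := by
    rw [Finset.disjoint_left]
    intro u h1 h2
    simp only [Finset.mem_filter, Finset.mem_univ, true_and, extFix_ne_zero_iff] at h1 h2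
    rw [h1.1] at h2
    exact absurd h2.1 (by simp)
  have h1 := suppCard_extFix false U
  have h2 := suppCard_extFix true U
  unfold suppCard at h1 h2 ⊢
  rw [key, Finset.card_union_of_disjoint hdisj]
  omega

/-- An entry of a covering: a rectangle given by its row and column indicator
vectors together with its claimed number of rows and columns. -/
structure Ent (n : ℕ) where
  U : (Fin n → Bool) → ℤ
  V : (Fin n → Bool) → ℤ
  a : ℕ
  b : ℕ

/-- The recursive covering: `cov n c` covers `Dmat n`, where the boolean `c`
records the orientation that the next "wide" coordinate should receive. -/
def cov : (n : ℕ) → Bool → List (Ent n)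
  | 0, _ => [⟨fun _ => 1, fun _ => 1, 1, 1⟩]
  | n+1, false =>
      ((cov n true).map fun e => ⟨extFree e.U, extFix false e.V, 2 * e.a, e.b⟩)
      ++ ((cov n false).map fun e => ⟨extFix false e.U, extFix true e.V, e.a, e.b⟩)
  | n+1, true =>
      ((cov n false).map fun e => ⟨extFix false e.U, extFree e.V, e.a, 2 * e.b⟩)
      ++ ((cov n true).map fun e => ⟨extFix true e.U, extFix false e.V, e.a, e.b⟩)

lemma Dmat_succ (n : ℕ) (u v : Fin (n+1) → Bool) :
    Dmat (n+1) u v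
      = (if u 0 = true ∧ v 0 = true then 0 else 1) * Dmat n (Fin.tail u) (Fin.tail v) := by
  show (if ∀ i, ¬(u i = true ∧ v i = true) then (1:ℤ) else 0) = _
  show _ = (if u 0 = true ∧ v 0 = true then (0:ℤ) else 1) *
      (if ∀ i, ¬(Fin.tail u i = true ∧ Fin.tail v i = true) then (1:ℤ) else 0)
  simp only [Fin.forall_fin_succ]
  by_cases h0 : u 0 = true ∧ v 0 = true <;>
    by_cases hr : ∀ i : Fin n, ¬(u i.succ = true ∧ v i.succ = true) <;>
      simp [h0, hr, Fin.tail]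

lemma cov_sum : ∀ (n : ℕ) (c : Bool) (u v : Fin n → Bool),
    ((cov n c).map fun e => e.U u * e.V v).sum = Dmat n u v := by
  intro n
  induction n with
  | zero =>
    intro c u v
    simp [cov, Dmat]
  | succ n ih =>
    intro c u v
    rw [Dmat_succ]
    cases c <;>
      simp only [cov, List.map_append, List.map_map, List.sum_append, Function.comp_def] <;>
      cases h0 : u 0 <;> cases h1 : v 0 <;>
        simp [Function.comp_def, extFix, extFree, h0, h1, ih]

lemma extFix_zero_one {n : ℕ} (k : Bool) (U : (Fin n → Bool) → ℤ)
    (hU : ∀ u, U u = 0 ∨ U u = 1) : ∀ u, extFix k U u = 0 ∨ extFix k U u = 1 := by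
  intro u; unfold extFix; split
  · exact hU _
  · exact Or.inl rfl

lemma extFree_zero_one {n : ℕ} (U : (Fin n → Bool) → ℤ)
    (hU : ∀ u, U u = 0 ∨ U u = 1) : ∀ u, extFree U u = 0 ∨ extFree U u = 1 :=
  fun u => hU _

/-- The invariants of the covering: 0/1 entries, the recorded numbers of rows
and columns are the support sizes, they are positive, and they are balanced
(equal or off by a factor 2, in the direction recorded by `c`). -/
lemma cov_good : ∀ (n : ℕ) (c : Bool), ∀ e ∈ cov n c,
    (∀ u, e.U u = 0 ∨ e.U u = 1) ∧ (∀ v, e.V v = 0 ∨ e.V v = 1) ∧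
    suppCard e.U = e.a ∧ suppCard e.V = e.b ∧ 1 ≤ e.a ∧ 1 ≤ e.b ∧
    (c = false → (e.a = e.b ∨ e.a = 2 * e.b)) ∧
    (c = true → (e.b = e.a ∨ e.b = 2 * e.a)) := by
  intro n
  induction n with
  | zero =>
    intro c e he
    simp only [cov, List.mem_singleton] at he
    subst he
    refine ⟨fun _ => Or.inr rfl, fun _ => Or.inr rfl, ?_, ?_, le_refl _, le_refl _,
      fun _ => Or.inl rfl, fun _ => Or.inl rfl⟩ <;>
    · show (Finset.univ.filter fun _ => (1:ℤ) ≠ 0).card = 1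
      simp
  | succ n ih =>
    intro c e he
    cases c <;> simp only [cov, List.mem_append, List.mem_map] at he <;>
      rcases he with ⟨f, hf, rfl⟩ | ⟨f, hf, rfl⟩ <;>
      obtain ⟨hU, hV, hsU, hsV, ha, hb, hbF, hbT⟩ := ih _ f hf
    · exact ⟨extFree_zero_one _ hU, extFix_zero_one _ _ hV,
        by simp [suppCard_extFree, hsU], by simp [suppCard_extFix, hsV],
        by dsimp only; omega, hb,
        fun _ => by dsimp only; rcases hbT rfl with h | h <;> omega,
        fun h => by simp at h⟩
    · exact ⟨extFix_zero_one _ _ hU, extFix_zero_one _ _ hV,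
        by simp [suppCard_extFix, hsU], by simp [suppCard_extFix, hsV],
        ha, hb,
        fun _ => by dsimp only; exact hbF rfl,
        fun h => by simp at h⟩
    · exact ⟨extFix_zero_one _ _ hU, extFree_zero_one _ hV,
        by simp [suppCard_extFix, hsU], by simp [suppCard_extFree, hsV],
        ha, by dsimp only; omega,
        fun h => by simp at h,
        fun _ => by dsimp only; rcases hbF rfl with h | h <;> omega⟩
    · exact ⟨extFix_zero_one _ _ hU, extFix_zero_one _ _ hV,
        by simp [suppCard_extFix, hsU], by simp [suppCard_extFix, hsV],
        ha, hb,
        fun h => by simp at h,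
        fun _ => by dsimp only; exact hbT rfl⟩

lemma numRows_vecMulVec {n : ℕ} (U V : (Fin n → Bool) → ℤ) (hV : ∃ v, V v ≠ 0) :
    numRows (Matrix.vecMulVec U V) = suppCard U := by
  unfold numRows suppCard
  apply congrArg Finset.card
  ext u
  simp only [Finset.mem_filter, Finset.mem_univ, true_and]
  simp only [Matrix.vecMulVec_apply]
  constructor
  · rintro ⟨j, hj⟩
    exact left_ne_zero_of_mul hj
  · intro h
    obtain ⟨v, hv⟩ := hV
    exact ⟨v, mul_ne_zero h hv⟩

lemma numCols_vecMulVec {n : ℕ} (U V : (Fin n → Bool) → ℤ) (hU : ∃ u, U u ≠ 0) :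
    numCols (Matrix.vecMulVec U V) = suppCard V := by
  unfold numCols suppCard
  apply congrArg Finset.card
  ext v
  simp only [Finset.mem_filter, Finset.mem_univ, true_and]
  simp only [Matrix.vecMulVec_apply]
  constructor
  · rintro ⟨j, hj⟩
    exact right_ne_zero_of_mul hj
  · intro h
    obtain ⟨u, hu⟩ := hU
    exact ⟨u, mul_ne_zero hu h⟩

lemma list_sum_apply {α β : Type*} [Fintype α] [Fintype β]
    (L : List (Matrix α β ℤ)) (u : α) (v : β) :
    L.sum u v = (L.map fun M => M u v).sum := by
  induction L with
  | nil => simp [Matrix.zero_apply]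
  | cons M L ih => simp [Matrix.add_apply, ih]

/-- The sequence `(x n, y n)` with `x n + √2 · y n = (1+√2)^n`. -/
def xf : ℕ → ℕ × ℕ
  | 0 => (1, 1)
  | n+1 => (2 * (xf n).2 + (xf n).1, (xf n).1 + (xf n).2)

lemma cov_sums : ∀ n : ℕ,
    ((cov n false).map (fun e => e.a)).sum = (xf n).1 ∧
    ((cov n false).map (fun e => e.b)).sum = (xf n).2 ∧
    ((cov n true).map (fun e => e.a)).sum = (xf n).2 ∧
    ((cov n true).map (fun e => e.b)).sum = (xf n).1 := by
  intro n
  induction n with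
  | zero => refine ⟨?_, ?_, ?_, ?_⟩ <;> simp only [cov, xf] <;> simp
  | succ n ih =>
    obtain ⟨h1, h2, h3, h4⟩ := ih
    refine ⟨?_, ?_, ?_, ?_⟩ <;>
      simp [cov, xf, Function.comp_def, List.sum_map_mul_left, h1, h2, h3, h4]

lemma xf_pow (n : ℕ) :
    ((xf n).1 : ℝ) + Real.sqrt 2 * (xf n).2 = (1 + Real.sqrt 2) ^ (n + 1) := by
  induction n with
  | zero => simp [xf]
  | succ n ih =>
    have s2 : Real.sqrt 2 * Real.sqrt 2 = 2 := Real.mul_self_sqrt (by norm_num)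
    rw [pow_succ, ← ih]
    show ((2 * (xf n).2 + (xf n).1 : ℕ) : ℝ) + Real.sqrt 2 * ((xf n).1 + (xf n).2 : ℕ) = _
    push_cast
    linear_combination (-((xf n).2 : ℝ)) * s2

lemma xf_le (n : ℕ) : (xf n).1 ≤ 2 * (xf n).2 := by
  induction n with
  | zero => simp [xf]
  | succ n ih => simp only [xf]; omega

lemma cost_bound (n : ℕ) :
    ((xf n).1 : ℝ) + (xf n).2 ≤ 3 / Real.sqrt 2 * (1 + Real.sqrt 2) ^ n := by
  set s := Real.sqrt 2 with hs
  set x : ℝ := ((xf n).1 : ℝ) with hx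
  set y : ℝ := ((xf n).2 : ℝ) with hy
  set P : ℝ := (1 + s) ^ n with hP
  have s2 : s * s = 2 := Real.mul_self_sqrt (by norm_num)
  have h1 : 1 ≤ s := by nlinarith [Real.sqrt_nonneg 2]
  have hpos : (0:ℝ) < s := by linarith
  have hP1 : (1 + s) * P = x + s * y := by
    rw [hP, hx, hy, hs, ← pow_succ']
    exact (xf_pow n).symm
  clear_value s x y P
  have hxyc : x ≤ 2 * y := by
    rw [hx, hy]
    exact_mod_cast Nat.cast_le.mpr (xf_le n)
  have hprod : 0 ≤ (s - 1) * (2 * y - x) :=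
    mul_nonneg (by linarith) (by linarith)
  have key : (s + 2) * (x + y) ≤ 3 * x + 3 * s * y := by nlinarith [hprod]
  have hs1 : (0:ℝ) < 1 + s := by linarith
  rw [div_mul_eq_mul_div, le_div_iff₀ hpos, ← mul_le_mul_iff_left₀ hs1]
  calc (x + y) * s * (1 + s) = (s + 2) * (x + y) := by linear_combination (x + y) * s2
    _ ≤ 3 * x + 3 * s * y := key
    _ = 3 * P * (1 + s) := by linear_combination -3 * hP1

lemma sum_cast_add {n : ℕ} (l : List (Ent n)) :
    (l.map fun e => ((e.a : ℝ) + e.b)).sum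
      = ((l.map (fun e => e.a)).sum : ℕ) + ((l.map (fun e => e.b)).sum : ℕ) := by
  induction l with
  | nil => simp
  | cons e l ih =>
    simp only [List.map_cons, List.sum_cons, ih]
    push_cast
    ring

end Stmt7aux

/-- Taking the n-fold Kronecker product of the covering {2×1 rectangle, 1×1
rectangle} of D₂, orienting each product rectangle to have narrowness ≤ 2,
yields a SUM-covering of D_{2^n} of complexity at most (3/√2)·(1+√2)^n;
in particular SUM₂(D_{2^n}) ≤ C·(1+√2)^n. -/
theorem stmt_7 (n : ℕ) :
    ∃ L : List (Matrix (Fin n → Bool) (Fin n → Bool) ℤ),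
      (∀ R ∈ L, IsRectangle R) ∧ L.sum = Dmat n ∧
        (∀ R ∈ L, max (numRows R) (numCols R) ≤ 2 * min (numRows R) (numCols R)) ∧
        ((L.map fun R => ((numRows R : ℝ) + (numCols R : ℝ))).sum ≤
          3 / Real.sqrt 2 * (1 + Real.sqrt 2) ^ n) := by
  classical
  refine ⟨(Stmt7aux.cov n false).map fun e => Matrix.vecMulVec e.U e.V, ?_, ?_, ?_, ?_⟩
  · rintro R hR
    rw [List.mem_map] at hR
    obtain ⟨e, he, rfl⟩ := hR
    obtain ⟨hU, hV, -⟩ := Stmt7aux.cov_good n false e he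
    exact ⟨e.U, e.V, hU, hV, rfl⟩
  · ext u v
    rw [Stmt7aux.list_sum_apply, List.map_map]
    have h := Stmt7aux.cov_sum n false u v
    simpa [Function.comp_def, Matrix.vecMulVec_apply] using h
  · rintro R hR
    rw [List.mem_map] at hR
    obtain ⟨e, he, rfl⟩ := hR
    obtain ⟨hU, hV, hsU, hsV, ha, hb, hbal, -⟩ := Stmt7aux.cov_good n false e he
    have hVne : ∃ v, e.V v ≠ 0 := by
      have hpos : 0 < (Finset.univ.filter fun v => e.V v ≠ 0).card := by
        show 0 < Stmt7aux.suppCard e.V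
        omega
      obtain ⟨v, hv⟩ := Finset.card_pos.mp hpos
      simp only [Finset.mem_filter] at hv
      exact ⟨v, hv.2⟩
    have hUne : ∃ u, e.U u ≠ 0 := by
      have hpos : 0 < (Finset.univ.filter fun u => e.U u ≠ 0).card := by
        show 0 < Stmt7aux.suppCard e.U
        omega
      obtain ⟨u, hu⟩ := Finset.card_pos.mp hpos
      simp only [Finset.mem_filter] at hu
      exact ⟨u, hu.2⟩
    rw [Stmt7aux.numRows_vecMulVec _ _ hVne, Stmt7aux.numCols_vecMulVec _ _ hUne, hsU, hsV]
    rcases hbal rfl with h | h <;> omega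
  · rw [List.map_map]
    have hmap : ((Stmt7aux.cov n false).map
          ((fun R => ((numRows R : ℝ) + (numCols R : ℝ))) ∘ fun e => Matrix.vecMulVec e.U e.V))
        = (Stmt7aux.cov n false).map (fun e => ((e.a : ℝ) + e.b)) := by
      apply List.map_congr_left
      intro e he
      obtain ⟨hU, hV, hsU, hsV, ha, hb, -, -⟩ := Stmt7aux.cov_good n false e he
      have hVne : ∃ v, e.V v ≠ 0 := by
        have hpos : 0 < (Finset.univ.filter fun v => e.V v ≠ 0).card := by
          show 0 < Stmt7aux.suppCard e.V
          omega
        obtain ⟨v, hv⟩ := Finset.card_pos.mp hpos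
        simp only [Finset.mem_filter] at hv
        exact ⟨v, hv.2⟩
      have hUne : ∃ u, e.U u ≠ 0 := by
        have hpos : 0 < (Finset.univ.filter fun u => e.U u ≠ 0).card := by
          show 0 < Stmt7aux.suppCard e.U
          omega
        obtain ⟨u, hu⟩ := Finset.card_pos.mp hpos
        simp only [Finset.mem_filter] at hu
        exact ⟨u, hu.2⟩
      simp only [Function.comp_apply]
      rw [Stmt7aux.numRows_vecMulVec _ _ hVne, Stmt7aux.numCols_vecMulVec _ _ hUne, hsU, hsV]
    rw [hmap, Stmt7aux.sum_cast_add]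
    obtain ⟨h1, h2, -, -⟩ := Stmt7aux.cov_sums n
    rw [h1, h2]
    exact Stmt7aux.cost_bound n
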